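/- In the setting of the HJB theorem, if the residual satisfies r(x) ≥ −εQ(x) on Ω_c, V̂(0)=0, and for every admissible control u the trajectory φ(t,x,u) from x ∈ Ω_c converges to 0, then V̂(x) ≤ (1+ε)·V*(x) for all x ∈ Ω_c, where V*(x) = inf over admissible u of J(x,u). (Uses a last-exit-time argument: after time τ_x = sup{t : V̂(φ(t)) > V̂(x)} the trajectory remains in the sublevel set {V̂ ≤ V̂(x)} ⊆ Ω_c, V̂(φ(τ_x)) = V̂(x), and d/dt V̂(φ(t)) ≥ −(1+ε)(Q + uᵀRu) there.) -/

import Mathlib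

open Matrix MeasureTheory Filter Topology

/-- Upper value bound from a one-sided HJB residual bound: if `r ≥ -ε Q` on
`Ω_c = {y ∈ Ω | V̂ y ≤ c}` and every admissible control drives the state from
`x ∈ Ω_c` to the origin, then `V̂ x ≤ (1+ε) V*(x)` where `V*` is the infimum of
the costs of admissible controls. -/
lemma key_quad {k : ℕ} (R : Matrix (Fin k) (Fin k) ℝ) (hR : R.PosDef) (a v : Fin k → ℝ) :
    0 ≤ a ⬝ᵥ v + v ⬝ᵥ (R *ᵥ v) + (1/4 : ℝ) * (a ⬝ᵥ (R⁻¹ *ᵥ a)) := by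
  have hRsymm : Rᵀ = R := by
    have := hR.1.eq; rwa [conjTranspose_eq_transpose_of_trivial] at this
  have hdet : IsUnit R.det := hR.det_pos.ne'.isUnit
  set b : Fin k → ℝ := R⁻¹ *ᵥ a with hb
  have hRb : R *ᵥ b = a := by
    rw [hb, mulVec_mulVec, Matrix.mul_nonsing_inv _ hdet, one_mulVec]
  set w : Fin k → ℝ := v + (1/2 : ℝ) • b with hw
  have hpos : 0 ≤ w ⬝ᵥ (R *ᵥ w) := by
    simpa using hR.posSemidef.dotProduct_mulVec_nonneg w
  have hbRv : b ⬝ᵥ (R *ᵥ v) = a ⬝ᵥ v := by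
    rw [dotProduct_mulVec, ← mulVec_transpose, hRsymm, hRb]
  have hba : b ⬝ᵥ a = a ⬝ᵥ b := dotProduct_comm _ _
  have expand : w ⬝ᵥ (R *ᵥ w) = v ⬝ᵥ (R *ᵥ v) + a ⬝ᵥ v + (1/4 : ℝ) * (a ⬝ᵥ b) := by
    rw [hw, mulVec_add, mulVec_smul, hRb, dotProduct_add, add_dotProduct, add_dotProduct,
      smul_dotProduct, dotProduct_smul, smul_dotProduct, hbRv, dotProduct_comm v a,
      dotProduct_smul, hba, smul_eq_mul]
    ring_nf
  linarith [hpos, expand ▸ hpos]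

theorem hjb_upper_value_bound
    {n k : ℕ}
    (f : (Fin n → ℝ) → (Fin n → ℝ))
    (g : (Fin n → ℝ) → Matrix (Fin n) (Fin k) ℝ)
    (Q : (Fin n → ℝ) → ℝ)
    (R : (Fin n → ℝ) → Matrix (Fin k) (Fin k) ℝ)
    (Vhat : (Fin n → ℝ) → ℝ)
    (DV : (Fin n → ℝ) → (Fin n → ℝ))
    (Ω : Set (Fin n → ℝ)) (c : ℝ)
    (ε : ℝ) (hε0 : 0 ≤ ε) (hε1 : ε < 1)
    (hQ : ∀ y, 0 ≤ Q y)
    (hR : ∀ y, (R y).PosDef)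
    (hVhat0 : Vhat 0 = 0)
    (hres : ∀ y ∈ Ω, Vhat y ≤ c →
      -(ε * Q y) ≤ Q y + DV y ⬝ᵥ f y -
        (1/4 : ℝ) * (DV y ⬝ᵥ (g y *ᵥ ((R y)⁻¹ *ᵥ ((g y)ᵀ *ᵥ DV y)))))
    (x : Fin n → ℝ) (hxΩ : x ∈ Ω) (hxc : Vhat x ≤ c)
    (U : Set (ℝ → (Fin k → ℝ))) (hUne : U.Nonempty)
    (traj : (ℝ → (Fin k → ℝ)) → ℝ → (Fin n → ℝ))
    (htraj0 : ∀ u ∈ U, traj u 0 = x)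
    (htrajΩ : ∀ u ∈ U, ∀ t : ℝ, 0 ≤ t → traj u t ∈ Ω)
    (hchain : ∀ u ∈ U, ∀ t : ℝ, 0 ≤ t →
      HasDerivAt (fun s => Vhat (traj u s))
        (DV (traj u t) ⬝ᵥ (f (traj u t) + g (traj u t) *ᵥ u t)) t)
    (hlim : ∀ u ∈ U, Tendsto (fun t => traj u t) atTop (𝓝 0))
    (hVlim : ∀ u ∈ U, Tendsto (fun T => Vhat (traj u T)) atTop (𝓝 0))
    (hint : ∀ u ∈ U, IntegrableOn
      (fun t => Q (traj u t) + u t ⬝ᵥ (R (traj u t) *ᵥ u t)) (Set.Ioi (0:ℝ)))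
    (Jc : (ℝ → (Fin k → ℝ)) → ℝ)
    (hJc : ∀ u ∈ U, Jc u = ∫ t in Set.Ioi (0:ℝ),
      (Q (traj u t) + u t ⬝ᵥ (R (traj u t) *ᵥ u t)))
    (hbdd : BddBelow (Jc '' U))
    (Vstar : ℝ) (hVstar : Vstar = sInf (Jc '' U)) :
    Vhat x ≤ (1 + ε) * Vstar := by
  have h1ε : (0:ℝ) < 1 + ε := by linarith
  have main : ∀ u ∈ U, Vhat x ≤ (1 + ε) * Jc u := by
    intro u hu
    set φ : ℝ → ℝ := fun t => Vhat (traj u t) with hφdef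
    set h : ℝ → ℝ := fun t => Q (traj u t) + u t ⬝ᵥ (R (traj u t) *ᵥ u t) with hhdef
    have hhnn : ∀ t, 0 ≤ h t := fun t =>
      add_nonneg (hQ _) (by simpa using (hR (traj u t)).posSemidef.dotProduct_mulVec_nonneg (u t))
    have hIntnn : 0 ≤ ∫ t in Set.Ioi (0:ℝ), h t :=
      setIntegral_nonneg measurableSet_Ioi (fun t _ => hhnn t)
    rw [hJc u hu]
    by_cases hx0 : Vhat x ≤ 0
    · nlinarith
    push_neg at hx0
    -- last exit time argument
    set S : Set ℝ := Set.Ici (0:ℝ) ∩ φ ⁻¹' Set.Ici (Vhat x) with hSdef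
    have h0S : (0:ℝ) ∈ S := by
      refine ⟨Set.mem_Ici.2 le_rfl, ?_⟩
      simp only [Set.mem_preimage, Set.mem_Ici, hφdef, htraj0 u hu, le_refl]
    have hScl : IsClosed S := by
      refine ContinuousOn.preimage_isClosed_of_isClosed ?_ isClosed_Ici isClosed_Ici
      intro t ht
      exact ((hchain u hu t ht).continuousAt).continuousWithinAt
    have hSbdd : BddAbove S := by
      obtain ⟨M, hM⟩ := eventually_atTop.1 ((hVlim u hu).eventually_lt_const hx0)
      refine ⟨M, fun t ht => ?_⟩
      by_contra hc
      push_neg at hc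
      exact absurd ht.2 (not_le.2 (hM t hc.le))
    set τ : ℝ := sSup S with hτdef
    have hτS : τ ∈ S := hScl.csSup_mem ⟨0, h0S⟩ hSbdd
    have hτ0 : 0 ≤ τ := hτS.1
    have hτφ : Vhat x ≤ φ τ := hτS.2
    have hafter : ∀ t : ℝ, τ < t → Vhat (traj u t) ≤ c := by
      intro t ht
      have h0t : (0:ℝ) ≤ t := le_trans hτ0 ht.le
      have htS : t ∉ S := fun hts => absurd (le_csSup hSbdd hts) (not_le.2 ht)
      have : ¬ Vhat x ≤ φ t := fun hle => htS ⟨h0t, hle⟩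
      push_neg at this
      exact le_trans this.le hxc
    -- pointwise derivative bound after τ
    have hptwise : ∀ t : ℝ, τ < t →
        -(DV (traj u t) ⬝ᵥ (f (traj u t) + g (traj u t) *ᵥ u t)) ≤ (1 + ε) * h t := by
      intro t ht
      have h0t : (0:ℝ) ≤ t := le_trans hτ0 ht.le
      set y := traj u t with hy
      have hyΩ : y ∈ Ω := htrajΩ u hu t h0t
      have hyc : Vhat y ≤ c := hafter t ht
      have hres' := hres y hyΩ hyc
      set a : Fin k → ℝ := (g y)ᵀ *ᵥ DV y with ha
      have hdot : ∀ z : Fin k → ℝ, DV y ⬝ᵥ (g y *ᵥ z) = a ⬝ᵥ z := by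
        intro z
        rw [dotProduct_mulVec, ← mulVec_transpose]
      rw [hdot] at hres'
      have hkey := key_quad (R y) (hR y) a (u t)
      have huRu : 0 ≤ u t ⬝ᵥ (R y *ᵥ u t) := by
        simpa using (hR y).posSemidef.dotProduct_mulVec_nonneg (u t)
      have hexp : DV y ⬝ᵥ (f y + g y *ᵥ u t) = DV y ⬝ᵥ f y + a ⬝ᵥ u t := by
        rw [dotProduct_add, hdot]
      rw [hexp, hhdef]
      simp only
      nlinarith [mul_nonneg hε0 huRu, mul_nonneg hε0 (hQ y), hQ y]
    -- integral inequality from τ to T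
    have hest : ∀ T : ℝ, τ ≤ T → Vhat x - (1 + ε) * ∫ t in Set.Ioi (0:ℝ), h t ≤ φ T := by
      intro T hT
      have hcont : ContinuousOn (fun t => -φ t) (Set.Icc τ T) := by
        intro t ht
        exact (((hchain u hu t (le_trans hτ0 ht.1)).continuousAt).neg).continuousWithinAt
      have hInt2 : IntegrableOn (fun t => (1 + ε) * h t) (Set.Icc τ T) := by
        rw [integrableOn_Icc_iff_integrableOn_Ioc]
        exact (((hint u hu).mono_set
          (fun t htm => lt_of_le_of_lt hτ0 htm.1)).const_mul (1 + ε))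
      have hFTC := intervalIntegral.sub_le_integral_of_hasDeriv_right_of_le hT hcont
        (g' := fun t => -(DV (traj u t) ⬝ᵥ (f (traj u t) + g (traj u t) *ᵥ u t)))
        (fun t ht => ((hchain u hu t (le_trans hτ0 ht.1.le)).neg).hasDerivWithinAt)
        hInt2 (fun t ht => hptwise t ht.1)
      have heq : (∫ y in τ..T, (1 + ε) * h y) = (1 + ε) * ∫ y in Set.Ioc τ T, h y := by
        rw [intervalIntegral.integral_of_le hT, ← integral_const_mul]
      have hmono : (∫ y in Set.Ioc τ T, h y) ≤ ∫ y in Set.Ioi (0:ℝ), h y := by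
        apply setIntegral_mono_set (hint u hu)
          (Filter.Eventually.of_forall (fun t => hhnn t))
        exact Filter.Eventually.of_forall (fun t htm => lt_of_le_of_lt hτ0 htm.1)
      have h1 : -φ T - -φ τ ≤ (1 + ε) * ∫ y in Set.Ioc τ T, h y := by
        rw [← heq]; exact hFTC
      have h2 : (1 + ε) * (∫ y in Set.Ioc τ T, h y) ≤
          (1 + ε) * ∫ y in Set.Ioi (0:ℝ), h y := by
        exact mul_le_mul_of_nonneg_left hmono h1ε.le
      have := hτφ
      linarith
    have hev : ∀ᶠ T in atTop, Vhat x - (1 + ε) * (∫ t in Set.Ioi (0:ℝ), h t) ≤ φ T :=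
      eventually_atTop.2 ⟨τ, fun T hT => hest T hT⟩
    have hle0 : Vhat x - (1 + ε) * (∫ t in Set.Ioi (0:ℝ), h t) ≤ 0 :=
      ge_of_tendsto (hVlim u hu) hev
    linarith
  have hdiv : Vhat x / (1 + ε) ≤ sInf (Jc '' U) := by
    refine le_csInf (hUne.image Jc) ?_
    rintro b ⟨u, hu, rfl⟩
    rw [div_le_iff₀ h1ε]
    calc Vhat x ≤ (1 + ε) * Jc u := main u hu
      _ = Jc u * (1 + ε) := mul_comm _ _
  rw [hVstar]
  have := (div_le_iff₀ h1ε).1 hdiv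
  linarith [this]
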